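/- arXiv:1303.4007 — 2 statements merged into one kernel-verified Lean document; each statement's English description precedes it below -/
import Mathlib

section
/- Let H be a complex Hilbert space, n ≥ 1, and let η, ξ₁, …, ξₙ ∈ H be unit vectors such that |⟨ξᵢ, ξⱼ⟩| ≤ ε for all 1 ≤ i < j ≤ n and ⟨η, ξᵢ⟩ = ⟨η, ξⱼ⟩ for all 1 ≤ i, j ≤ n. If 0 ≤ ε ≤ 1/(2n), then |⟨η, ξᵢ⟩|² ≤ 1/n + 8nε for every 1 ≤ i ≤ n. -/
theorem almost_orthogonal_vectors_bound
    {H : Type*} [NormedAddCommGroup H] [InnerProductSpace ℂ H]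
    (n : ℕ) (hn : 1 ≤ n) (ε : ℝ)
    (η : H) (ξ : Fin n → H)
    (hη : ‖η‖ = 1) (hξ : ∀ i, ‖ξ i‖ = 1)
    (horth : ∀ i j : Fin n, i < j → ‖(inner ℂ (ξ i) (ξ j) : ℂ)‖ ≤ ε)
    (heq : ∀ i j : Fin n, (inner ℂ η (ξ i) : ℂ) = (inner ℂ η (ξ j) : ℂ))
    (hε0 : 0 ≤ ε) (hε : ε ≤ 1 / (2 * n)) :
    ∀ i : Fin n, ‖(inner ℂ η (ξ i) : ℂ)‖ ^ 2 ≤ 1 / n + 8 * n * ε := by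
  intro i
  set c : ℂ := inner ℂ η (ξ i) with hc
  set s : H := ∑ j, ξ j with hs
  -- inner η s = n * c
  have h1 : (inner ℂ η s : ℂ) = (n : ℂ) * c := by
    rw [hs, inner_sum]
    have hj : ∀ j : Fin n, (inner ℂ η (ξ j) : ℂ) = c := fun j => heq j i
    simp [hj]
  -- Cauchy–Schwarz
  have h2 : (n : ℝ) * ‖c‖ ≤ ‖s‖ := by
    have h := norm_inner_le_norm (𝕜 := ℂ) η s
    rw [h1, hη] at h
    simpa using h
  -- term bound
  have hterm : ∀ a b : Fin n,
      ‖(inner ℂ (ξ a) (ξ b) : ℂ)‖ ≤ (if a = b then (1:ℝ) else 0) + ε := by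
    intro a b
    rcases lt_trichotomy a b with hab | hab | hab
    · simp only [if_neg hab.ne, zero_add]
      simpa using horth a b hab
    · subst hab
      rw [if_pos rfl, inner_self_eq_norm_sq_to_K, hξ a]
      simpa using hε0
    · simp only [if_neg hab.ne', zero_add]
      rw [← inner_conj_symm, RCLike.norm_conj]
      simpa using horth b a hab
  -- norm of s squared
  have h3 : ‖s‖ ^ 2 ≤ (n : ℝ) + n * n * ε := by
    have hre : ‖s‖ ^ 2 = Complex.re (inner ℂ s s : ℂ) := by
      rw [← inner_self_eq_norm_sq (𝕜 := ℂ) s]; rfl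
    have hexp : (inner ℂ s s : ℂ) = ∑ a : Fin n, ∑ b : Fin n, (inner ℂ (ξ a) (ξ b) : ℂ) := by
      rw [hs, sum_inner]
      exact Finset.sum_congr rfl fun a _ => inner_sum _ _ _
    have hb : ‖(inner ℂ s s : ℂ)‖ ≤ (n : ℝ) + n * n * ε := by
      rw [hexp]
      calc ‖∑ a : Fin n, ∑ b : Fin n, (inner ℂ (ξ a) (ξ b) : ℂ)‖
          ≤ ∑ a : Fin n, ∑ b : Fin n, ‖(inner ℂ (ξ a) (ξ b) : ℂ)‖ := by
            refine (norm_sum_le _ _).trans ?_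
            exact Finset.sum_le_sum fun a _ => norm_sum_le _ _
        _ ≤ ∑ a : Fin n, ∑ b : Fin n, ((if a = b then (1:ℝ) else 0) + ε) :=
            Finset.sum_le_sum fun a _ => Finset.sum_le_sum fun b _ => hterm a b
        _ = (n : ℝ) + n * n * ε := by
            simp [Finset.sum_add_distrib, Finset.sum_ite_eq, Finset.mul_sum, mul_comm]
            ring
    calc ‖s‖ ^ 2 = Complex.re (inner ℂ s s : ℂ) := hre
      _ ≤ ‖(inner ℂ s s : ℂ)‖ := Complex.re_le_norm _
      _ ≤ (n : ℝ) + n * n * ε := hb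
  -- combine
  have hcabs : ‖c‖ = ‖c‖ := rfl
  have hnc : 0 ≤ (n : ℝ) * ‖c‖ := by positivity
  have hsq : ((n : ℝ) * ‖c‖) ^ 2 ≤ (n : ℝ) + n * n * ε := by
    calc ((n : ℝ) * ‖c‖) ^ 2 ≤ ‖s‖ ^ 2 := by
          apply pow_le_pow_left₀ hnc h2
      _ ≤ (n : ℝ) + n * n * ε := h3
  have hn1 : (1 : ℝ) ≤ (n : ℝ) := by exact_mod_cast hn
  have hninv : (n : ℝ) * (1 / n) = 1 := by
    field_simp
  rw [hcabs]
  nlinarith [sq_nonneg (‖c‖), mul_pos (lt_of_lt_of_le one_pos hn1) (lt_of_lt_of_le one_pos hn1), sq_nonneg ((n:ℝ) - 1), mul_nonneg (mul_nonneg hε0 (le_trans one_pos.le hn1)) (le_trans one_pos.le hn1)]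
end

section
/- Let H be a complex Hilbert space, n ≥ 1, ε > 0, and let η, ξ₁, …, ξₙ ∈ H be unit vectors such that |⟨ξᵢ, ξⱼ⟩| ≤ ε for all 1 ≤ i < j ≤ n and ⟨η, ξᵢ⟩ = ⟨η, ξⱼ⟩ for all 1 ≤ i, j ≤ n. If ε ≤ 1/(2n) and ε^{-1/2} ≤ n ≤ 2·ε^{-1/2}, then |⟨η, ξᵢ⟩| ≤ 5·ε^{1/4} for every 1 ≤ i ≤ n. -/
set_option maxHeartbeats 800000


theorem almost_orthogonal_vectors_bound'
    {H : Type*} [NormedAddCommGroup H] [InnerProductSpace ℂ H]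
    (n : ℕ) (hn : 1 ≤ n) (ε : ℝ) (hε0 : 0 < ε)
    (η : H) (ξ : Fin n → H)
    (hη : ‖η‖ = 1) (hξ : ∀ i, ‖ξ i‖ = 1)
    (horth : ∀ i j : Fin n, i < j → ‖(inner ℂ (ξ i) (ξ j) : ℂ)‖ ≤ ε)
    (heq : ∀ i j : Fin n, (inner ℂ η (ξ i) : ℂ) = (inner ℂ η (ξ j) : ℂ))
    (hε : ε ≤ 1 / (2 * n))
    (hlow : ε ^ (-(1 : ℝ) / 2) ≤ (n : ℝ))
    (hhigh : (n : ℝ) ≤ 2 * ε ^ (-(1 : ℝ) / 2)) :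
    ∀ i : Fin n, ‖(inner ℂ η (ξ i) : ℂ)‖ ≤ 5 * ε ^ ((1 : ℝ) / 4) := by
  intro i
  have hnpos : (0:ℝ) < n := by exact_mod_cast hn
  have hn1 : (1:ℝ) ≤ n := by exact_mod_cast hn
  set c : ℂ := inner ℂ η (ξ i) with hc
  set S : H := ∑ j, ξ j with hS
  -- inner ℂ η S = n * c
  have h1 : (inner ℂ η S : ℂ) = (n : ℂ) * c := by
    rw [hS, inner_sum]
    rw [Finset.sum_congr rfl (fun j _ => heq j i)]
    simp [hc]
  -- Cauchy-Schwarz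
  have hCS : (n : ℝ) * ‖c‖ ≤ ‖S‖ := by
    have := norm_inner_le_norm (𝕜 := ℂ) η S
    rw [hη, one_mul, h1] at this
    simpa [norm_mul, Complex.norm_natCast] using this
  -- bound on ‖S‖²
  have hS2 : ‖S‖^2 ≤ (n : ℝ) + (n:ℝ)^2 * ε := by
    have hre : ‖S‖^2 = Complex.re (inner ℂ S S : ℂ) := by
      exact (inner_self_eq_norm_sq (𝕜 := ℂ) S).symm
    have hinner : (inner ℂ S S : ℂ) = ∑ j, ∑ k, (inner ℂ (ξ j) (ξ k) : ℂ) := by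
      rw [hS, sum_inner]
      exact Finset.sum_congr rfl fun j _ => inner_sum _ _ _
    have hbound : ∀ j k : Fin n, ‖(inner ℂ (ξ j) (ξ k) : ℂ)‖ ≤
        ε + (if j = k then 1 - ε else 0) := by
      intro j k
      rcases lt_trichotomy j k with h | h | h
      · simp [h.ne, horth j k h]
      · subst h
        have h11 : ‖(inner ℂ (ξ j) (ξ j) : ℂ)‖ ≤ 1 := by
          simpa [hξ j] using norm_inner_le_norm (𝕜 := ℂ) (ξ j) (ξ j)
        rw [if_pos rfl]
        linarith
      · have hsym : ‖(inner ℂ (ξ j) (ξ k) : ℂ)‖ = ‖(inner ℂ (ξ k) (ξ j) : ℂ)‖ := by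
          exact norm_inner_symm (ξ j) (ξ k)
        have h2 := horth k j h
        have hne : ¬ (j = k) := h.ne'
        rw [if_neg hne, hsym]
        linarith
    calc ‖S‖^2 = Complex.re (inner ℂ S S : ℂ) := hre
      _ ≤ ‖(inner ℂ S S : ℂ)‖ := Complex.re_le_norm _
      _ = ‖(∑ j, ∑ k, (inner ℂ (ξ j) (ξ k) : ℂ))‖ := by rw [hinner]
      _ ≤ ∑ j, ∑ k, ‖(inner ℂ (ξ j) (ξ k) : ℂ)‖ := by
          refine (norm_sum_le _ _).trans ?_
          exact Finset.sum_le_sum fun j _ => norm_sum_le _ _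
      _ ≤ ∑ j : Fin n, ∑ k : Fin n, (ε + if j = k then 1 - ε else 0) := by
          exact Finset.sum_le_sum fun j _ => Finset.sum_le_sum fun k _ => hbound j k
      _ = (n:ℝ)^2 * ε + n * (1 - ε) := by
          simp [Finset.sum_add_distrib, Finset.sum_ite_eq, Finset.card_univ]
          ring
      _ ≤ (n : ℝ) + (n:ℝ)^2 * ε := by nlinarith [hε0.le, hnpos]
  -- combine
  have habs : (0:ℝ) ≤ ‖c‖ := norm_nonneg c
  have hkey : (n:ℝ)^2 * (‖c‖)^2 ≤ (n : ℝ) + (n:ℝ)^2 * ε := by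
    have := pow_le_pow_left₀ (by positivity) hCS 2
    calc (n:ℝ)^2 * (‖c‖)^2 = ((n:ℝ) * ‖c‖)^2 := by ring
      _ ≤ ‖S‖^2 := this
      _ ≤ _ := hS2
  set s : ℝ := ε ^ ((1:ℝ)/2) with hs
  have hspos : 0 < s := Real.rpow_pos_of_pos hε0 _
  have hinv : ε ^ (-(1:ℝ)/2) = s⁻¹ := by
    rw [hs, ← Real.rpow_neg hε0.le]
    norm_num
  have h1n : 1 / (n:ℝ) ≤ s := by
    rw [hinv] at hlow
    rw [div_le_iff₀ hnpos]
    calc (1:ℝ) = s * s⁻¹ := by field_simp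
      _ ≤ s * n := by exact mul_le_mul_of_nonneg_left hlow hspos.le
  have hε1 : ε ≤ 1 := by
    have : (1:ℝ) ≤ 2 * n := by linarith
    calc ε ≤ 1 / (2 * n) := hε
      _ ≤ 1 := by rw [div_le_one (by linarith)]; linarith
  have hεs : ε ≤ s := by
    rw [hs]
    nth_rewrite 1 [← Real.rpow_one ε]
    exact Real.rpow_le_rpow_of_exponent_ge hε0 hε1 (by norm_num)
  have hc2 : (‖c‖)^2 ≤ 2 * s := by
    have hfact : (n:ℝ)^2 * (1/n) = n := by field_simp
    nlinarith [mul_le_mul_of_nonneg_left h1n (sq_nonneg (n:ℝ)),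
      mul_le_mul_of_nonneg_left hεs (sq_nonneg (n:ℝ)), sq_nonneg (n:ℝ)]
  -- final
  have hq : (ε ^ ((1:ℝ)/4))^2 = s := by
    rw [hs, ← Real.rpow_natCast (ε ^ ((1:ℝ)/4)) 2, ← Real.rpow_mul hε0.le]
    norm_num
  have hfinal : (‖c‖)^2 ≤ (5 * ε ^ ((1:ℝ)/4))^2 := by
    calc (‖c‖)^2 ≤ 2 * s := hc2
      _ ≤ 25 * s := by linarith
      _ = (5 * ε ^ ((1:ℝ)/4))^2 := by rw [mul_pow, hq]; ring
  have h5 : (0:ℝ) ≤ 5 * ε ^ ((1:ℝ)/4) := by positivity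
  have := Real.sqrt_le_sqrt hfinal
  rwa [Real.sqrt_sq habs, Real.sqrt_sq h5] at this
end
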